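/- Let σ₀ and σ₁ be positive definite density matrices. Define φ(r) = −log Tr(σ₁ σ₀^{r/2} σ₁^{-r} σ₀^{r/2}) for r ∈ [0,1]. Then φ(0) = 0 and φ'(0) = D(σ₁‖σ₀). -/

import Mathlib

open Matrix
open scoped ComplexOrder

variable {d : Type*} [Fintype d] [DecidableEq d]

open Classical in
/-- Functional calculus for Hermitian matrices: apply `f` to the eigenvalues.
Returns `0` if the matrix is not Hermitian. -/
noncomputable def mfun (f : ℝ → ℝ) (A : Matrix d d ℂ) : Matrix d d ℂ :=
  if hA : A.IsHermitian then
    (hA.eigenvectorUnitary : Matrix d d ℂ) *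
      Matrix.diagonal (fun i => (f (hA.eigenvalues i) : ℂ)) *
      star (hA.eigenvectorUnitary : Matrix d d ℂ)
  else 0

/-- Matrix logarithm on the support (eigenvalues `≤ 0` are mapped to `0`). -/
noncomputable def logm (A : Matrix d d ℂ) : Matrix d d ℂ :=
  mfun (fun x => if x ≤ 0 then 0 else Real.log x) A

/-- Matrix real power on the support (eigenvalues `≤ 0` are mapped to `0`). -/
noncomputable def powm (A : Matrix d d ℂ) (p : ℝ) : Matrix d d ℂ :=
  mfun (fun x => if x ≤ 0 then 0 else x ^ p) A

/-- Quantum relative entropy `D(ρ‖σ) = Tr(ρ (log ρ − log σ))` (natural log). -/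
noncomputable def qRelEnt (ρ σ : Matrix d d ℂ) : ℝ :=
  ((ρ * (logm ρ - logm σ)).trace).re

/-- The support of `ρ` is contained in the support of `σ` (kernel containment,
equivalent to range containment for Hermitian matrices). -/
def SuppSubset (ρ σ : Matrix d d ℂ) : Prop :=
  ∀ v : d → ℂ, σ.mulVec v = 0 → ρ.mulVec v = 0

/-- Trace norm of a Hermitian matrix: `Tr |A|`. -/
noncomputable def traceNorm (A : Matrix d d ℂ) : ℝ :=
  ((mfun (fun x => |x|) A).trace).re

set_option linter.unusedSectionVars false

open Classical in
lemma mfun_eq (f : ℝ → ℝ) {A : Matrix d d ℂ} (hA : A.IsHermitian) :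
    mfun f A = (hA.eigenvectorUnitary : Matrix d d ℂ) *
      Matrix.diagonal (fun i => (f (hA.eigenvalues i) : ℂ)) *
      star (hA.eigenvectorUnitary : Matrix d d ℂ) := by
  rw [mfun, dif_pos hA]

lemma mfun_apply (f : ℝ → ℝ) {A : Matrix d d ℂ} (hA : A.IsHermitian) (q s : d) :
    mfun f A q s = ∑ i, (hA.eigenvectorUnitary : Matrix d d ℂ) q i *
      (f (hA.eigenvalues i) : ℂ) *
      star ((hA.eigenvectorUnitary : Matrix d d ℂ) s i) := by
  rw [mfun_eq f hA, Matrix.mul_apply]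
  refine Finset.sum_congr rfl fun i _ => ?_
  rw [Matrix.mul_diagonal, Matrix.star_apply]

lemma mfun_one (f : ℝ → ℝ) {A : Matrix d d ℂ} (hA : A.IsHermitian)
    (hf : ∀ i, f (hA.eigenvalues i) = 1) : mfun f A = 1 := by
  rw [mfun_eq f hA]
  have : (Matrix.diagonal (fun i => (f (hA.eigenvalues i) : ℂ))) = 1 := by
    rw [show (fun i => (f (hA.eigenvalues i) : ℂ)) = fun _ => 1 from
      funext fun i => by rw [hf i]; norm_num, Matrix.diagonal_one]
  rw [this, mul_one]
  exact Unitary.coe_mul_star_self _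

lemma powm_zero {A : Matrix d d ℂ} (hA : A.PosDef) : powm A 0 = 1 := by
  refine mfun_one _ hA.1 fun i => ?_
  rw [if_neg (not_le.2 (hA.eigenvalues_pos i)), Real.rpow_zero]

lemma logm_apply {A : Matrix d d ℂ} (hA : A.PosDef) (q s : d) :
    logm A q s = ∑ i, (hA.1.eigenvectorUnitary : Matrix d d ℂ) q i *
      (Real.log (hA.1.eigenvalues i) : ℂ) *
      star ((hA.1.eigenvectorUnitary : Matrix d d ℂ) s i) := by
  rw [logm, mfun_apply _ hA.1]
  refine Finset.sum_congr rfl fun i _ => ?_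
  rw [if_neg (not_le.2 (hA.eigenvalues_pos i))]

lemma powm_apply {A : Matrix d d ℂ} (hA : A.PosDef) (p : ℝ) (q s : d) :
    powm A p q s = ∑ i, (hA.1.eigenvectorUnitary : Matrix d d ℂ) q i *
      ((hA.1.eigenvalues i ^ p : ℝ) : ℂ) *
      star ((hA.1.eigenvectorUnitary : Matrix d d ℂ) s i) := by
  rw [powm, mfun_apply _ hA.1]
  refine Finset.sum_congr rfl fun i _ => ?_
  rw [if_neg (not_le.2 (hA.eigenvalues_pos i))]

/-- Entrywise derivative of `r ↦ powm A (r * c)` at `0`. -/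
lemma hasDerivAt_powm_entry {A : Matrix d d ℂ} (hA : A.PosDef) (c : ℝ) (q s : d) :
    HasDerivAt (fun r : ℝ => powm A (r * c) q s) ((c • logm A) q s) 0 := by
  have key : ∀ r : ℝ, powm A (r * c) q s =
      ∑ i, (hA.1.eigenvectorUnitary : Matrix d d ℂ) q i *
        ((hA.1.eigenvalues i ^ (r * c) : ℝ) : ℂ) *
        star ((hA.1.eigenvectorUnitary : Matrix d d ℂ) s i) := fun r => powm_apply hA _ q s
  have goal_eq : (c • logm A) q s =
      ∑ i, (hA.1.eigenvectorUnitary : Matrix d d ℂ) q i *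
        ((c * Real.log (hA.1.eigenvalues i) : ℝ) : ℂ) *
        star ((hA.1.eigenvectorUnitary : Matrix d d ℂ) s i) := by
    rw [Matrix.smul_apply, logm_apply hA, Finset.smul_sum]
    refine Finset.sum_congr rfl fun i _ => ?_
    rw [Complex.real_smul]
    push_cast
    ring
  rw [goal_eq]
  simp only [key]
  refine HasDerivAt.fun_sum fun i _ => ?_
  have ha := hA.eigenvalues_pos i
  set a := hA.1.eigenvalues i with ha_def
  have hre : HasDerivAt (fun r : ℝ => a ^ (r * c)) (c * Real.log a) 0 := by
    have h1 : HasDerivAt (fun r : ℝ => Real.log a * (r * c)) (Real.log a * c) 0 := by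
      simpa using ((hasDerivAt_id (0:ℝ)).mul_const c).const_mul (Real.log a)
    have h2 := (Real.hasDerivAt_exp (Real.log a * (0 * c))).comp 0 h1
    have : (fun r : ℝ => a ^ (r * c)) = fun r => Real.exp (Real.log a * (r * c)) := by
      funext r; rw [Real.rpow_def_of_pos ha]
    rw [this]
    refine h2.congr_deriv ?_
    simp [mul_comm]
  have hco : HasDerivAt (fun r : ℝ => ((a ^ (r * c) : ℝ) : ℂ))
      ((c * Real.log a : ℝ) : ℂ) 0 := hre.ofReal_comp
  exact (hco.const_mul _).mul_const _

lemma hasDerivAt_matrix_mul {A B : ℝ → Matrix d d ℂ} {A' B' : Matrix d d ℂ} {r : ℝ}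
    (hA : ∀ i j, HasDerivAt (fun t => A t i j) (A' i j) r)
    (hB : ∀ i j, HasDerivAt (fun t => B t i j) (B' i j) r) (i j : d) :
    HasDerivAt (fun t => (A t * B t) i j) ((A' * B r + A r * B') i j) r := by
  simp only [Matrix.mul_apply, Matrix.add_apply]
  rw [← Finset.sum_add_distrib]
  exact HasDerivAt.fun_sum fun k _ => (hA i k).mul (hB k j)

lemma hasDerivAt_matrix_trace {M : ℝ → Matrix d d ℂ} {M' : Matrix d d ℂ} {r : ℝ}
    (h : ∀ i j, HasDerivAt (fun t => M t i j) (M' i j) r) :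
    HasDerivAt (fun t => (M t).trace) M'.trace r := by
  simp only [Matrix.trace, Matrix.diag]
  exact HasDerivAt.fun_sum fun i _ => h i i

/-- For positive definite density matrices `σ₀`, `σ₁`, the function
`φ(r) = −log Tr(σ₁ σ₀^{r/2} σ₁^{-r} σ₀^{r/2})` satisfies `φ(0) = 0` and
`φ'(0) = D(σ₁‖σ₀)`. -/
theorem deriv_phi_at_zero (σ₀ σ₁ : Matrix d d ℂ)
    (h₀ : σ₀.PosDef) (h₀1 : σ₀.trace = 1)
    (h₁ : σ₁.PosDef) (h₁1 : σ₁.trace = 1) :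
    (fun r : ℝ =>
        -Real.log (((σ₁ * powm σ₀ (r / 2) * powm σ₁ (-r) * powm σ₀ (r / 2)).trace).re)) 0
      = 0 ∧
    HasDerivAt
      (fun r : ℝ =>
        -Real.log (((σ₁ * powm σ₀ (r / 2) * powm σ₁ (-r) * powm σ₀ (r / 2)).trace).re))
      (qRelEnt σ₁ σ₀) 0 := by
  have hP0 : powm σ₀ (0 * (2⁻¹ : ℝ)) = 1 := by rw [zero_mul]; exact powm_zero h₀
  have hQ0 : powm σ₁ (0 * (-1 : ℝ)) = 1 := by rw [zero_mul]; exact powm_zero h₁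
  -- derivative of the matrix function entrywise
  have hP : ∀ i j, HasDerivAt (fun t : ℝ => powm σ₀ (t * (2⁻¹ : ℝ)) i j)
      (((2⁻¹ : ℝ) • logm σ₀) i j) 0 := fun i j => hasDerivAt_powm_entry h₀ _ i j
  have hQ : ∀ i j, HasDerivAt (fun t : ℝ => powm σ₁ (t * (-1 : ℝ)) i j)
      (((-1 : ℝ) • logm σ₁) i j) 0 := fun i j => hasDerivAt_powm_entry h₁ _ i j
  have hC : ∀ i j, HasDerivAt (fun _ : ℝ => σ₁ i j) ((0 : Matrix d d ℂ) i j) 0 := by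
    intro i j; simpa using hasDerivAt_const (0:ℝ) (σ₁ i j)
  have h1 := fun i j => hasDerivAt_matrix_mul hC hP i j
  have h2 := fun i j => hasDerivAt_matrix_mul h1 hQ i j
  have h3 := fun i j => hasDerivAt_matrix_mul h2 hP i j
  have htr := hasDerivAt_matrix_trace h3
  -- simplify the derivative matrix
  set D0 := logm σ₀
  set D1 := logm σ₁
  have hM' : ((0 * powm σ₀ (0 * (2⁻¹:ℝ)) + σ₁ * ((2⁻¹:ℝ) • D0)) * powm σ₁ (0 * (-1:ℝ)) +
        σ₁ * powm σ₀ (0 * (2⁻¹:ℝ)) * ((-1:ℝ) • D1)) * powm σ₀ (0 * (2⁻¹:ℝ)) +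
        σ₁ * powm σ₀ (0 * (2⁻¹:ℝ)) * powm σ₁ (0 * (-1:ℝ)) * ((2⁻¹:ℝ) • D0)
      = σ₁ * D0 - σ₁ * D1 := by
    rw [hP0, hQ0]
    simp only [zero_mul, mul_one, one_mul, zero_add, mul_smul_comm]
    module
  rw [hM'] at htr
  -- the trace derivative value
  have hder : ((σ₁ * D0 - σ₁ * D1).trace).re = -(qRelEnt σ₁ σ₀) := by
    have : σ₁ * D0 - σ₁ * D1 = -(σ₁ * (D1 - D0)) := by noncomm_ring
    rw [this, qRelEnt]
    simp [Matrix.trace_neg, D0, D1]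
  -- real part
  have hre := Complex.reCLM.hasFDerivAt.comp_hasDerivAt 0 htr
  -- value at 0
  have hval : ((σ₁ * powm σ₀ (0 * (2⁻¹:ℝ)) * powm σ₁ (0 * (-1:ℝ)) * powm σ₀ (0 * (2⁻¹:ℝ))).trace).re
      = 1 := by
    rw [hP0, hQ0, mul_one, mul_one, mul_one, h₁1]
    norm_num
  -- compose with log
  have hlog : HasDerivAt (fun t : ℝ =>
      -Real.log (((σ₁ * powm σ₀ (t * (2⁻¹:ℝ)) * powm σ₁ (t * (-1:ℝ)) * powm σ₀ (t * (2⁻¹:ℝ))).trace).re))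
      (qRelEnt σ₁ σ₀) 0 := by
    have hl : HasDerivAt Real.log (1 : ℝ)⁻¹
        (((σ₁ * powm σ₀ (0 * (2⁻¹:ℝ)) * powm σ₁ (0 * (-1:ℝ)) * powm σ₀ (0 * (2⁻¹:ℝ))).trace).re) := by
      rw [hval]; exact Real.hasDerivAt_log one_ne_zero
    have hcomp := (hl.comp 0 hre).neg
    refine hcomp.congr_deriv ?_
    · rw [show Complex.reCLM ((σ₁ * D0 - σ₁ * D1).trace) = ((σ₁ * D0 - σ₁ * D1).trace).re from rfl,
        hder]
      ring
  constructor
  · have e0 : (0:ℝ) / 2 = 0 * (2⁻¹:ℝ) := by norm_num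
    have e0' : -(0:ℝ) = 0 * (-1:ℝ) := by norm_num
    simp only [e0, e0', hP0, hQ0, mul_one, h₁1]
    norm_num
  · have feq : (fun r : ℝ =>
        -Real.log (((σ₁ * powm σ₀ (r / 2) * powm σ₁ (-r) * powm σ₀ (r / 2)).trace).re))
        = (fun t : ℝ =>
        -Real.log (((σ₁ * powm σ₀ (t * (2⁻¹:ℝ)) * powm σ₁ (t * (-1:ℝ)) * powm σ₀ (t * (2⁻¹:ℝ))).trace).re)) := by
      funext r
      have e1 : r / 2 = r * (2⁻¹:ℝ) := div_eq_mul_inv r 2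
      have e2 : -r = r * (-1:ℝ) := by ring
      rw [e1, e2]
    rw [feq]
    exact hlog
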